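/- The Coxeter quotient B_3/(σ_i^3) of the 3-strand braid group by the normal closure of σ_1^3 is a finite group of order 24. -/

import Mathlib

/-- The braid relation of `B₃`: `σ₁σ₂σ₁ = σ₂σ₁σ₂`. -/
def braidRel3 : FreeGroup (Fin 2) :=
  FreeGroup.of 0 * FreeGroup.of 1 * FreeGroup.of 0 *
    (FreeGroup.of 1 * FreeGroup.of 0 * FreeGroup.of 1)⁻¹

/-- Relations presenting the Coxeter quotient `B₃/(σᵢ³)`: the braid relation together
with `σ₁³` (whose normal closure contains all `σᵢ³`, since `σ₂` is conjugate to `σ₁`). -/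
def rels3_3 : Set (FreeGroup (Fin 2)) := {braidRel3, (FreeGroup.of 0) ^ 3}

namespace B33
abbrev P := PresentedGroup rels3_3
abbrev a : P := PresentedGroup.of 0
abbrev b : P := PresentedGroup.of 1

lemma rel_mem (r : FreeGroup (Fin 2)) (h : r ∈ rels3_3) : PresentedGroup.mk rels3_3 r = 1 :=
  (QuotientGroup.eq_one_iff _).2 (Subgroup.subset_normalClosure h)

lemma h1 : a * b * a = b * a * b := by
  have := rel_mem braidRel3 (Set.mem_insert _ _)
  simp only [braidRel3, map_mul, map_inv] at this
  rw [mul_inv_eq_one] at this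
  exact this

lemma h2 : a ^ 3 = 1 := by
  have := rel_mem ((FreeGroup.of 0) ^ 3) (Set.mem_insert_of_mem _ rfl)
  rw [map_pow] at this; exact this

lemma h3 : b ^ 3 = 1 := by
  have hc : (a*b) * a * (a*b)⁻¹ = b := by
    rw [h1]; group
  calc b ^ 3 = ((a*b) * a * (a*b)⁻¹) ^ 3 := by rw [hc]
    _ = (a*b) * a^3 * (a*b)⁻¹ := conj_pow
    _ = 1 := by rw [h2, mul_one, mul_inv_cancel]

lemma haaa : a*(a*a) = 1 := by rw [← pow_three]; exact h2

lemma raaa (x : P) : a*(a*(a*x)) = x := by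
  rw [← mul_assoc, ← mul_assoc, mul_assoc a a a, haaa, one_mul]

lemma hbbb : b*(b*b) = 1 := by rw [← pow_three]; exact h3

lemma rbbb (x : P) : b*(b*(b*x)) = x := by
  rw [← mul_assoc, ← mul_assoc, mul_assoc b b b, hbbb, one_mul]

lemma raba (x : P) : a*(b*(a*x)) = b*(a*(b*x)) := by
  have e1 : a*(b*(a*x)) = (a*b*a)*x := by group
  have e2 : b*(a*(b*x)) = (b*a*b)*x := by group
  rw [e1, e2, h1]


lemma mc (c : P) {x y : P} (h : x = y) : c * x = c * y := congrArg (c * ·) h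

abbrev e0 : P := (1 : P)
abbrev e1 : P := (a * (1 : P))
abbrev e2 : P := (b * (1 : P))
abbrev e3 : P := (a * (a * (1 : P)))
abbrev e4 : P := (a * (b * (1 : P)))
abbrev e5 : P := (b * (a * (1 : P)))
abbrev e6 : P := (b * (b * (1 : P)))
abbrev e7 : P := (a * (a * (b * (1 : P))))
abbrev e8 : P := (a * (b * (a * (1 : P))))
abbrev e9 : P := (a * (b * (b * (1 : P))))
abbrev e10 : P := (b * (a * (a * (1 : P))))
abbrev e11 : P := (b * (b * (a * (1 : P))))
abbrev e12 : P := (a * (a * (b * (a * (1 : P)))))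
abbrev e13 : P := (a * (a * (b * (b * (1 : P)))))
abbrev e14 : P := (a * (b * (a * (a * (1 : P)))))
abbrev e15 : P := (a * (b * (b * (a * (1 : P)))))
abbrev e16 : P := (b * (a * (a * (b * (1 : P)))))
abbrev e17 : P := (b * (b * (a * (a * (1 : P)))))
abbrev e18 : P := (a * (a * (b * (a * (a * (1 : P))))))
abbrev e19 : P := (a * (a * (b * (b * (a * (1 : P))))))
abbrev e20 : P := (a * (b * (a * (a * (b * (1 : P))))))
abbrev e21 : P := (a * (b * (b * (a * (a * (1 : P))))))
abbrev e22 : P := (a * (a * (b * (a * (a * (b * (1 : P)))))))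
abbrev e23 : P := (a * (a * (b * (b * (a * (a * (1 : P)))))))

abbrev L : List P := [e0, e1, e2, e3, e4, e5, e6, e7, e8, e9, e10, e11, e12, e13, e14, e15, e16, e17, e18, e19, e20, e21, e22, e23]

lemma sA0 : a * e0 = e1 := rfl
lemma sA1 : a * e1 = e3 := rfl
lemma sA2 : a * e2 = e4 := rfl
lemma sA3 : a * e3 = e0 := (raaa (1 : P))
lemma sA4 : a * e4 = e7 := rfl
lemma sA5 : a * e5 = e8 := rfl
lemma sA6 : a * e6 = e9 := rfl
lemma sA7 : a * e7 = e2 := (raaa (b * (1 : P)))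
lemma sA8 : a * e8 = e12 := rfl
lemma sA9 : a * e9 = e13 := rfl
lemma sA10 : a * e10 = e14 := rfl
lemma sA11 : a * e11 = e15 := rfl
lemma sA12 : a * e12 = e5 := (raaa (b * (a * (1 : P))))
lemma sA13 : a * e13 = e6 := (raaa (b * (b * (1 : P))))
lemma sA14 : a * e14 = e18 := rfl
lemma sA15 : a * e15 = e19 := rfl
lemma sA16 : a * e16 = e20 := rfl
lemma sA17 : a * e17 = e21 := rfl
lemma sA18 : a * e18 = e10 := (raaa (b * (a * (a * (1 : P)))))
lemma sA19 : a * e19 = e11 := (raaa (b * (b * (a * (1 : P)))))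
lemma sA20 : a * e20 = e22 := rfl
lemma sA21 : a * e21 = e23 := rfl
lemma sA22 : a * e22 = e16 := (raaa (b * (a * (a * (b * (1 : P))))))
lemma sA23 : a * e23 = e17 := (raaa (b * (b * (a * (a * (1 : P))))))
lemma sB0 : b * e0 = e2 := rfl
lemma sB1 : b * e1 = e5 := rfl
lemma sB2 : b * e2 = e6 := rfl
lemma sB3 : b * e3 = e10 := rfl
lemma sB4 : b * e4 = e8 := ((raba (1 : P)).symm)
lemma sB5 : b * e5 = e11 := rfl
lemma sB6 : b * e6 = e0 := (rbbb (1 : P))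
lemma sB7 : b * e7 = e16 := rfl
lemma sB8 : b * e8 = e14 := ((raba (a * (1 : P))).symm)
lemma sB9 : b * e9 = e12 := ((raba (b * (1 : P))).symm).trans ((mc a ((raba (1 : P)).symm)))
lemma sB10 : b * e10 = e17 := rfl
lemma sB11 : b * e11 = e1 := (rbbb (a * (1 : P)))
lemma sB12 : b * e12 = e20 := (mc b (mc a (raba (1 : P)))).trans (((raba (a * (b * (1 : P)))).symm))
lemma sB13 : b * e13 = e19 := ((raaa (b * (a * (a * (b * (b * (1 : P))))))).symm).trans ((mc a (mc a (raba (a * (b * (b * (1 : P))))))).trans ((mc a (mc a (mc b (raba (b * (b * (1 : P))))))).trans ((mc a (mc a (mc b (mc b (mc a (rbbb (1 : P))))))))))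
lemma sB14 : b * e14 = e4 := ((raba (a * (a * (1 : P)))).symm).trans ((mc a (mc b (raaa (1 : P)))))
lemma sB15 : b * e15 = e18 := ((raba (b * (a * (1 : P)))).symm).trans ((mc a ((raba (a * (1 : P))).symm)))
lemma sB16 : b * e16 = e21 := (mc b (mc b (mc a (mc a (mc b ((raaa (1 : P)).symm)))))).trans ((mc b (mc b (mc a (raba (a * (a * (1 : P))))))).trans ((mc b (mc b (raba (b * (a * (a * (1 : P))))))).trans ((rbbb (a * (b * (b * (a * (a * (1 : P))))))))))
lemma sB17 : b * e17 = e3 := (rbbb (a * (a * (1 : P))))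
lemma sB18 : b * e18 = e22 := ((raaa (b * (a * (a * (b * (a * (a * (1 : P)))))))).symm).trans ((mc a (mc a (raba (a * (b * (a * (a * (1 : P)))))))).trans ((mc a (mc a (mc b (mc a ((raba (a * (a * (1 : P)))).symm))))).trans ((mc a (mc a (mc b (mc a (mc a (mc b (raaa (1 : P)))))))))))
lemma sB19 : b * e19 = e23 := ((raaa (b * (a * (a * (b * (b * (a * (1 : P)))))))).symm).trans ((mc a (mc a (raba (a * (b * (b * (a * (1 : P)))))))).trans ((mc a (mc a (mc b (raba (b * (b * (a * (1 : P)))))))).trans ((mc a (mc a (mc b (mc b (mc a (rbbb (a * (1 : P)))))))))))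
lemma sB20 : b * e20 = e9 := ((raba (a * (a * (b * (1 : P))))).symm).trans ((mc a (mc b (raaa (b * (1 : P))))))
lemma sB21 : b * e21 = e7 := ((raba (b * (a * (a * (1 : P))))).symm).trans ((mc a ((raba (a * (a * (1 : P)))).symm)).trans ((mc a (mc a (mc b (raaa (1 : P)))))))
lemma sB22 : b * e22 = e15 := (mc b (mc a (raba (a * (b * (1 : P)))))).trans (((raba (a * (b * (a * (b * (1 : P)))))).symm).trans ((mc a (mc b (mc a (mc a ((raba (1 : P)).symm))))).trans ((mc a (mc b (raaa (b * (a * (1 : P)))))))))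
lemma sB23 : b * e23 = e13 := ((raaa (b * (a * (a * (b * (b * (a * (a * (1 : P))))))))).symm).trans ((mc a (mc a (raba (a * (b * (b * (a * (a * (1 : P))))))))).trans ((mc a (mc a (mc b (raba (b * (b * (a * (a * (1 : P))))))))).trans ((mc a (mc a (mc b (mc b (mc a (rbbb (a * (a * (1 : P))))))))).trans ((mc a (mc a (mc b (mc b (raaa (1 : P))))))))))


abbrev SL := Matrix.SpecialLinearGroup (Fin 2) (ZMod 3)

instance : DecidableEq SL :=
  fun x y => decidable_of_iff _ Subtype.ext_iff.symm

def MA : SL := ⟨!![1,1;0,1], by decide⟩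
def MB : SL := ⟨!![1,0;2,1], by decide⟩

def fgen : Fin 2 → SL := ![MA, MB]

lemma frels : ∀ r ∈ rels3_3, FreeGroup.lift fgen r = 1 := by
  intro r hr
  simp only [rels3_3, Set.mem_insert_iff, Set.mem_singleton_iff] at hr
  rcases hr with rfl | rfl
  · simp only [braidRel3, map_mul, map_inv, FreeGroup.lift_apply_of, fgen,
      Matrix.cons_val_zero, Matrix.cons_val_one, Matrix.head_cons]
    rw [mul_inv_eq_one]
    decide
  · simp only [map_pow, FreeGroup.lift_apply_of, fgen, Matrix.cons_val_zero]
    decide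

noncomputable def f : P →* SL := PresentedGroup.toGroup frels

lemma fa : f a = MA := by
  unfold f; rw [PresentedGroup.toGroup.of]; rfl

lemma fb : f b = MB := by
  unfold f; rw [PresentedGroup.toGroup.of]; rfl

lemma hnodup : L.Nodup := by
  have h : (L.map f).Nodup := by
    simp only [L, e0, e1, e2, e3, e4, e5, e6, e7, e8, e9, e10, e11, e12, e13, e14, e15, e16, e17, e18, e19, e20, e21, e22, e23, List.map_cons, List.map_nil, map_mul, map_one, fa, fb]
    decide
  exact h.of_map f

def S : Finset P := ⟨(L : Multiset P), hnodup⟩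

lemma m0 : e0 ∈ S := Finset.mem_mk.2 (Multiset.mem_coe.2 (List.Mem.head _))
lemma m1 : e1 ∈ S := Finset.mem_mk.2 (Multiset.mem_coe.2 (List.Mem.tail _ (List.Mem.head _)))
lemma m2 : e2 ∈ S := Finset.mem_mk.2 (Multiset.mem_coe.2 (List.Mem.tail _ (List.Mem.tail _ (List.Mem.head _))))
lemma m3 : e3 ∈ S := Finset.mem_mk.2 (Multiset.mem_coe.2 (List.Mem.tail _ (List.Mem.tail _ (List.Mem.tail _ (List.Mem.head _)))))
lemma m4 : e4 ∈ S := Finset.mem_mk.2 (Multiset.mem_coe.2 (List.Mem.tail _ (List.Mem.tail _ (List.Mem.tail _ (List.Mem.tail _ (List.Mem.head _))))))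
lemma m5 : e5 ∈ S := Finset.mem_mk.2 (Multiset.mem_coe.2 (List.Mem.tail _ (List.Mem.tail _ (List.Mem.tail _ (List.Mem.tail _ (List.Mem.tail _ (List.Mem.head _)))))))
lemma m6 : e6 ∈ S := Finset.mem_mk.2 (Multiset.mem_coe.2 (List.Mem.tail _ (List.Mem.tail _ (List.Mem.tail _ (List.Mem.tail _ (List.Mem.tail _ (List.Mem.tail _ (List.Mem.head _))))))))
lemma m7 : e7 ∈ S := Finset.mem_mk.2 (Multiset.mem_coe.2 (List.Mem.tail _ (List.Mem.tail _ (List.Mem.tail _ (List.Mem.tail _ (List.Mem.tail _ (List.Mem.tail _ (List.Mem.tail _ (List.Mem.head _)))))))))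
lemma m8 : e8 ∈ S := Finset.mem_mk.2 (Multiset.mem_coe.2 (List.Mem.tail _ (List.Mem.tail _ (List.Mem.tail _ (List.Mem.tail _ (List.Mem.tail _ (List.Mem.tail _ (List.Mem.tail _ (List.Mem.tail _ (List.Mem.head _))))))))))
lemma m9 : e9 ∈ S := Finset.mem_mk.2 (Multiset.mem_coe.2 (List.Mem.tail _ (List.Mem.tail _ (List.Mem.tail _ (List.Mem.tail _ (List.Mem.tail _ (List.Mem.tail _ (List.Mem.tail _ (List.Mem.tail _ (List.Mem.tail _ (List.Mem.head _)))))))))))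
lemma m10 : e10 ∈ S := Finset.mem_mk.2 (Multiset.mem_coe.2 (List.Mem.tail _ (List.Mem.tail _ (List.Mem.tail _ (List.Mem.tail _ (List.Mem.tail _ (List.Mem.tail _ (List.Mem.tail _ (List.Mem.tail _ (List.Mem.tail _ (List.Mem.tail _ (List.Mem.head _))))))))))))
lemma m11 : e11 ∈ S := Finset.mem_mk.2 (Multiset.mem_coe.2 (List.Mem.tail _ (List.Mem.tail _ (List.Mem.tail _ (List.Mem.tail _ (List.Mem.tail _ (List.Mem.tail _ (List.Mem.tail _ (List.Mem.tail _ (List.Mem.tail _ (List.Mem.tail _ (List.Mem.tail _ (List.Mem.head _)))))))))))))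
lemma m12 : e12 ∈ S := Finset.mem_mk.2 (Multiset.mem_coe.2 (List.Mem.tail _ (List.Mem.tail _ (List.Mem.tail _ (List.Mem.tail _ (List.Mem.tail _ (List.Mem.tail _ (List.Mem.tail _ (List.Mem.tail _ (List.Mem.tail _ (List.Mem.tail _ (List.Mem.tail _ (List.Mem.tail _ (List.Mem.head _))))))))))))))
lemma m13 : e13 ∈ S := Finset.mem_mk.2 (Multiset.mem_coe.2 (List.Mem.tail _ (List.Mem.tail _ (List.Mem.tail _ (List.Mem.tail _ (List.Mem.tail _ (List.Mem.tail _ (List.Mem.tail _ (List.Mem.tail _ (List.Mem.tail _ (List.Mem.tail _ (List.Mem.tail _ (List.Mem.tail _ (List.Mem.tail _ (List.Mem.head _)))))))))))))))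
lemma m14 : e14 ∈ S := Finset.mem_mk.2 (Multiset.mem_coe.2 (List.Mem.tail _ (List.Mem.tail _ (List.Mem.tail _ (List.Mem.tail _ (List.Mem.tail _ (List.Mem.tail _ (List.Mem.tail _ (List.Mem.tail _ (List.Mem.tail _ (List.Mem.tail _ (List.Mem.tail _ (List.Mem.tail _ (List.Mem.tail _ (List.Mem.tail _ (List.Mem.head _))))))))))))))))
lemma m15 : e15 ∈ S := Finset.mem_mk.2 (Multiset.mem_coe.2 (List.Mem.tail _ (List.Mem.tail _ (List.Mem.tail _ (List.Mem.tail _ (List.Mem.tail _ (List.Mem.tail _ (List.Mem.tail _ (List.Mem.tail _ (List.Mem.tail _ (List.Mem.tail _ (List.Mem.tail _ (List.Mem.tail _ (List.Mem.tail _ (List.Mem.tail _ (List.Mem.tail _ (List.Mem.head _)))))))))))))))))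
lemma m16 : e16 ∈ S := Finset.mem_mk.2 (Multiset.mem_coe.2 (List.Mem.tail _ (List.Mem.tail _ (List.Mem.tail _ (List.Mem.tail _ (List.Mem.tail _ (List.Mem.tail _ (List.Mem.tail _ (List.Mem.tail _ (List.Mem.tail _ (List.Mem.tail _ (List.Mem.tail _ (List.Mem.tail _ (List.Mem.tail _ (List.Mem.tail _ (List.Mem.tail _ (List.Mem.tail _ (List.Mem.head _))))))))))))))))))
lemma m17 : e17 ∈ S := Finset.mem_mk.2 (Multiset.mem_coe.2 (List.Mem.tail _ (List.Mem.tail _ (List.Mem.tail _ (List.Mem.tail _ (List.Mem.tail _ (List.Mem.tail _ (List.Mem.tail _ (List.Mem.tail _ (List.Mem.tail _ (List.Mem.tail _ (List.Mem.tail _ (List.Mem.tail _ (List.Mem.tail _ (List.Mem.tail _ (List.Mem.tail _ (List.Mem.tail _ (List.Mem.tail _ (List.Mem.head _)))))))))))))))))))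
lemma m18 : e18 ∈ S := Finset.mem_mk.2 (Multiset.mem_coe.2 (List.Mem.tail _ (List.Mem.tail _ (List.Mem.tail _ (List.Mem.tail _ (List.Mem.tail _ (List.Mem.tail _ (List.Mem.tail _ (List.Mem.tail _ (List.Mem.tail _ (List.Mem.tail _ (List.Mem.tail _ (List.Mem.tail _ (List.Mem.tail _ (List.Mem.tail _ (List.Mem.tail _ (List.Mem.tail _ (List.Mem.tail _ (List.Mem.tail _ (List.Mem.head _))))))))))))))))))))
lemma m19 : e19 ∈ S := Finset.mem_mk.2 (Multiset.mem_coe.2 (List.Mem.tail _ (List.Mem.tail _ (List.Mem.tail _ (List.Mem.tail _ (List.Mem.tail _ (List.Mem.tail _ (List.Mem.tail _ (List.Mem.tail _ (List.Mem.tail _ (List.Mem.tail _ (List.Mem.tail _ (List.Mem.tail _ (List.Mem.tail _ (List.Mem.tail _ (List.Mem.tail _ (List.Mem.tail _ (List.Mem.tail _ (List.Mem.tail _ (List.Mem.tail _ (List.Mem.head _)))))))))))))))))))))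
lemma m20 : e20 ∈ S := Finset.mem_mk.2 (Multiset.mem_coe.2 (List.Mem.tail _ (List.Mem.tail _ (List.Mem.tail _ (List.Mem.tail _ (List.Mem.tail _ (List.Mem.tail _ (List.Mem.tail _ (List.Mem.tail _ (List.Mem.tail _ (List.Mem.tail _ (List.Mem.tail _ (List.Mem.tail _ (List.Mem.tail _ (List.Mem.tail _ (List.Mem.tail _ (List.Mem.tail _ (List.Mem.tail _ (List.Mem.tail _ (List.Mem.tail _ (List.Mem.tail _ (List.Mem.head _))))))))))))))))))))))
lemma m21 : e21 ∈ S := Finset.mem_mk.2 (Multiset.mem_coe.2 (List.Mem.tail _ (List.Mem.tail _ (List.Mem.tail _ (List.Mem.tail _ (List.Mem.tail _ (List.Mem.tail _ (List.Mem.tail _ (List.Mem.tail _ (List.Mem.tail _ (List.Mem.tail _ (List.Mem.tail _ (List.Mem.tail _ (List.Mem.tail _ (List.Mem.tail _ (List.Mem.tail _ (List.Mem.tail _ (List.Mem.tail _ (List.Mem.tail _ (List.Mem.tail _ (List.Mem.tail _ (List.Mem.tail _ (List.Mem.head _)))))))))))))))))))))))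
lemma m22 : e22 ∈ S := Finset.mem_mk.2 (Multiset.mem_coe.2 (List.Mem.tail _ (List.Mem.tail _ (List.Mem.tail _ (List.Mem.tail _ (List.Mem.tail _ (List.Mem.tail _ (List.Mem.tail _ (List.Mem.tail _ (List.Mem.tail _ (List.Mem.tail _ (List.Mem.tail _ (List.Mem.tail _ (List.Mem.tail _ (List.Mem.tail _ (List.Mem.tail _ (List.Mem.tail _ (List.Mem.tail _ (List.Mem.tail _ (List.Mem.tail _ (List.Mem.tail _ (List.Mem.tail _ (List.Mem.tail _ (List.Mem.head _))))))))))))))))))))))))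
lemma m23 : e23 ∈ S := Finset.mem_mk.2 (Multiset.mem_coe.2 (List.Mem.tail _ (List.Mem.tail _ (List.Mem.tail _ (List.Mem.tail _ (List.Mem.tail _ (List.Mem.tail _ (List.Mem.tail _ (List.Mem.tail _ (List.Mem.tail _ (List.Mem.tail _ (List.Mem.tail _ (List.Mem.tail _ (List.Mem.tail _ (List.Mem.tail _ (List.Mem.tail _ (List.Mem.tail _ (List.Mem.tail _ (List.Mem.tail _ (List.Mem.tail _ (List.Mem.tail _ (List.Mem.tail _ (List.Mem.tail _ (List.Mem.tail _ (List.Mem.head _)))))))))))))))))))))))))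

lemma Amul : ∀ x ∈ S, a * x ∈ S := by
  intro x hx
  simp only [S, L, Finset.mem_mk, Finset.mem_def, Multiset.mem_coe, List.mem_cons, List.not_mem_nil, or_false] at hx
  rcases hx with rfl|rfl|rfl|rfl|rfl|rfl|rfl|rfl|rfl|rfl|rfl|rfl|rfl|rfl|rfl|rfl|rfl|rfl|rfl|rfl|rfl|rfl|rfl|rfl
  · rw [sA0]; exact m1
  · rw [sA1]; exact m3
  · rw [sA2]; exact m4
  · rw [sA3]; exact m0
  · rw [sA4]; exact m7
  · rw [sA5]; exact m8
  · rw [sA6]; exact m9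
  · rw [sA7]; exact m2
  · rw [sA8]; exact m12
  · rw [sA9]; exact m13
  · rw [sA10]; exact m14
  · rw [sA11]; exact m15
  · rw [sA12]; exact m5
  · rw [sA13]; exact m6
  · rw [sA14]; exact m18
  · rw [sA15]; exact m19
  · rw [sA16]; exact m20
  · rw [sA17]; exact m21
  · rw [sA18]; exact m10
  · rw [sA19]; exact m11
  · rw [sA20]; exact m22
  · rw [sA21]; exact m23
  · rw [sA22]; exact m16
  · rw [sA23]; exact m17

lemma Bmul : ∀ x ∈ S, b * x ∈ S := by
  intro x hx
  simp only [S, L, Finset.mem_mk, Finset.mem_def, Multiset.mem_coe, List.mem_cons, List.not_mem_nil, or_false] at hx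
  rcases hx with rfl|rfl|rfl|rfl|rfl|rfl|rfl|rfl|rfl|rfl|rfl|rfl|rfl|rfl|rfl|rfl|rfl|rfl|rfl|rfl|rfl|rfl|rfl|rfl
  · rw [sB0]; exact m2
  · rw [sB1]; exact m5
  · rw [sB2]; exact m6
  · rw [sB3]; exact m10
  · rw [sB4]; exact m8
  · rw [sB5]; exact m11
  · rw [sB6]; exact m0
  · rw [sB7]; exact m16
  · rw [sB8]; exact m14
  · rw [sB9]; exact m12
  · rw [sB10]; exact m17
  · rw [sB11]; exact m1
  · rw [sB12]; exact m20
  · rw [sB13]; exact m19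
  · rw [sB14]; exact m4
  · rw [sB15]; exact m18
  · rw [sB16]; exact m21
  · rw [sB17]; exact m3
  · rw [sB18]; exact m22
  · rw [sB19]; exact m23
  · rw [sB20]; exact m9
  · rw [sB21]; exact m7
  · rw [sB22]; exact m15
  · rw [sB23]; exact m13

lemma key : ∀ g : P, ∀ x ∈ S, g * x ∈ S := by
  intro g
  have hg : g ∈ Subgroup.closure (Set.range (PresentedGroup.of : Fin 2 → P)) := by
    rw [PresentedGroup.closure_range_of]; exact Subgroup.mem_top g
  refine Subgroup.closure_induction (p := fun g _ => ∀ x ∈ S, g * x ∈ S) ?_ ?_ ?_ ?_ hg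
  · rintro _ ⟨i, rfl⟩
    fin_cases i
    · exact Amul
    · exact Bmul
  · intro x hx; rwa [one_mul]
  · intro g h _ _ pg ph x hx
    rw [mul_assoc]; exact pg _ (ph x hx)
  · intro g _ pg x hx
    obtain ⟨y, hy, hxy⟩ := Finset.surj_on_of_inj_on_of_card_le (s := S) (t := S)
      (fun c _ => g * c) (fun c hc => pg c hc)
      (fun c₁ c₂ _ _ h => mul_left_cancel h) le_rfl x hx
    rw [hxy, ← mul_assoc, inv_mul_cancel, one_mul]
    exact hy

lemma cover : ∀ x : P, x ∈ S := by
  intro x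
  have h := key x e0 m0
  rwa [show (e0 : P) = 1 from rfl, mul_one] at h

noncomputable instance : Fintype P := ⟨S, cover⟩

end B33

/-- The Coxeter quotient `B₃/(σᵢ³)` is a finite group of order 24. -/
theorem card_coxeter_quotient_B3_3 : Nat.card (PresentedGroup rels3_3) = 24 := by
  rw [Nat.card_eq_fintype_card]
  rfl
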